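/- Let T ≥ 1, δ ≥ 0, and let ψ : ℝ → ℝ be convex. Define the primal f-divergence induced risk of x ∈ ℝ^T by ρ_p(x) = inf { t·(δ + μ + (1/T) ∑_t' ψ(x_{t'}/t − μ)) : t > 0, μ ∈ ℝ }. Then ρ_p is subadditive: for all x, y ∈ ℝ^T, ρ_p(x + y) ≤ ρ_p(x) + ρ_p(y). -/

import Mathlib

/-- The primal f-divergence induced risk
`ρ_p(x) = inf_{t > 0, μ ∈ ℝ} t·(δ + μ + (1/T) ∑_{t'} ψ(x_{t'}/t − μ))`
under the empirical (uniform) distribution. -/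
noncomputable def rhoPrimal (T : ℕ) (δ : ℝ) (ψ : ℝ → ℝ) (x : Fin T → ℝ) : ℝ :=
  sInf {v : ℝ | ∃ t : ℝ, 0 < t ∧ ∃ μ : ℝ,
    v = t * (δ + μ + (1 / (T : ℝ)) * ∑ t', ψ (x t' / t - μ))}

/-- The feasible-value set underlying `rhoPrimal`. -/
def riskSet (T : ℕ) (δ : ℝ) (ψ : ℝ → ℝ) (x : Fin T → ℝ) : Set ℝ :=
  {v : ℝ | ∃ t : ℝ, 0 < t ∧ ∃ μ : ℝ,
    v = t * (δ + μ + (1 / (T : ℝ)) * ∑ t', ψ (x t' / t - μ))}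

lemma rhoPrimal_eq (T : ℕ) (δ : ℝ) (ψ : ℝ → ℝ) (x : Fin T → ℝ) :
    rhoPrimal T δ ψ x = sInf (riskSet T δ ψ x) := rfl

lemma riskSet_nonempty (T : ℕ) (δ : ℝ) (ψ : ℝ → ℝ) (x : Fin T → ℝ) :
    (riskSet T δ ψ x).Nonempty :=
  ⟨_, 1, one_pos, 0, rfl⟩

/-- Key combination lemma: given feasible values for `x` and `y`, there is a feasible
value for `x + y` below their sum. -/
lemma riskSet_key (T : ℕ) (δ : ℝ) (ψ : ℝ → ℝ) (hψ : ConvexOn ℝ Set.univ ψ)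
    (x y : Fin T → ℝ) {v1 v2 : ℝ}
    (h1 : v1 ∈ riskSet T δ ψ x) (h2 : v2 ∈ riskSet T δ ψ y) :
    ∃ v ∈ riskSet T δ ψ (x + y), v ≤ v1 + v2 := by
  obtain ⟨t1, ht1, μ1, rfl⟩ := h1
  obtain ⟨t2, ht2, μ2, rfl⟩ := h2
  set t : ℝ := t1 + t2 with htdef
  have ht : 0 < t := by positivity
  set μ : ℝ := (t1 * μ1 + t2 * μ2) / t with hμdef
  refine ⟨_, ⟨t, ht, μ, rfl⟩, ?_⟩
  have hsum : ∀ i : Fin T, ψ ((x + y) i / t - μ) ≤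
      (t1 / t) * ψ (x i / t1 - μ1) + (t2 / t) * ψ (y i / t2 - μ2) := by
    intro i
    have hconv := hψ.2 (Set.mem_univ (x i / t1 - μ1)) (Set.mem_univ (y i / t2 - μ2))
      (by positivity : (0:ℝ) ≤ t1 / t) (by positivity : (0:ℝ) ≤ t2 / t)
      (by field_simp; exact htdef.symm)
    have heq : (t1 / t) • (x i / t1 - μ1) + (t2 / t) • (y i / t2 - μ2)
        = (x + y) i / t - μ := by
      simp only [smul_eq_mul, Pi.add_apply, hμdef]
      field_simp
      ring
    rw [heq] at hconv
    simpa using hconv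
  calc t * (δ + μ + (1 / (T : ℝ)) * ∑ t', ψ ((x + y) t' / t - μ))
      ≤ t * (δ + μ + (1 / (T : ℝ)) *
          ∑ t', ((t1 / t) * ψ (x t' / t1 - μ1) + (t2 / t) * ψ (y t' / t2 - μ2))) := by
        have : ∑ t', ψ ((x + y) t' / t - μ) ≤
            ∑ t', ((t1 / t) * ψ (x t' / t1 - μ1) + (t2 / t) * ψ (y t' / t2 - μ2)) :=
          Finset.sum_le_sum fun i _ => hsum i
        have hc : (0:ℝ) ≤ 1 / (T : ℝ) := by positivity
        nlinarith [mul_le_mul_of_nonneg_left this hc]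
    _ = t1 * (δ + μ1 + (1 / (T : ℝ)) * ∑ t', ψ (x t' / t1 - μ1))
        + t2 * (δ + μ2 + (1 / (T : ℝ)) * ∑ t', ψ (y t' / t2 - μ2)) := by
        rw [Finset.sum_add_distrib, ← Finset.mul_sum, ← Finset.mul_sum]
        set c : ℝ := 1 / (T : ℝ) with hc
        set S1 : ℝ := ∑ t', ψ (x t' / t1 - μ1) with hS1
        set S2 : ℝ := ∑ t', ψ (y t' / t2 - μ2) with hS2
        have hμ : t * μ = t1 * μ1 + t2 * μ2 := by
          rw [hμdef]; field_simp
        have e1 : t1 / t * t = t1 := div_mul_cancel₀ t1 ht.ne'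
        have e2 : t2 / t * t = t2 := div_mul_cancel₀ t2 ht.ne'
        linear_combination hμ + c * S1 * e1 + c * S2 * e2 + δ * htdef

/-- Unboundedness below transfers along addition. -/
lemma riskSet_not_bddBelow_add (T : ℕ) (δ : ℝ) (ψ : ℝ → ℝ)
    (hψ : ConvexOn ℝ Set.univ ψ) (a b : Fin T → ℝ)
    (ha : ¬ BddBelow (riskSet T δ ψ a)) :
    ¬ BddBelow (riskSet T δ ψ (a + b)) := by
  intro hab
  apply ha
  obtain ⟨w0, hw0⟩ := riskSet_nonempty T δ ψ b
  obtain ⟨c, hc⟩ := hab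
  refine ⟨c - w0, fun u hu => ?_⟩
  obtain ⟨v, hv, hle⟩ := riskSet_key T δ ψ hψ a b hu hw0
  have := hc hv
  linarith

theorem stmt_13 (T : ℕ) (hT : 1 ≤ T) (δ : ℝ) (hδ : 0 ≤ δ)
    (ψ : ℝ → ℝ) (hψ : ConvexOn ℝ Set.univ ψ) :
    ∀ x y : Fin T → ℝ,
      rhoPrimal T δ ψ (x + y) ≤ rhoPrimal T δ ψ x + rhoPrimal T δ ψ y := by
  intro x y
  have hxy_y : x + y + -x = y := by abel
  have hyx : y + x = x + y := add_comm y x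
  rw [rhoPrimal_eq, rhoPrimal_eq, rhoPrimal_eq]
  by_cases hx : BddBelow (riskSet T δ ψ x)
  · by_cases hy : BddBelow (riskSet T δ ψ y)
    · -- both bounded below; first show the target set is bounded below
      have hxy : BddBelow (riskSet T δ ψ (x + y)) := by
        by_contra hcon
        have := riskSet_not_bddBelow_add T δ ψ hψ (x + y) (-x) hcon
        rw [hxy_y] at this
        exact this hy
      rw [← sub_le_iff_le_add']
      refine le_csInf (riskSet_nonempty T δ ψ y) fun v2 hv2 => ?_
      rw [sub_le_iff_le_add', ← sub_le_iff_le_add]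
      refine le_csInf (riskSet_nonempty T δ ψ x) fun v1 hv1 => ?_
      rw [sub_le_iff_le_add]
      obtain ⟨v, hv, hle⟩ := riskSet_key T δ ψ hψ x y hv1 hv2
      exact (csInf_le hxy hv).trans (by linarith)
    · -- riskSet y unbounded below
      have hxy : ¬ BddBelow (riskSet T δ ψ (x + y)) := by
        have := riskSet_not_bddBelow_add T δ ψ hψ y x hy
        rwa [hyx] at this
      have hxx : ¬ BddBelow (riskSet T δ ψ x) := by
        have := riskSet_not_bddBelow_add T δ ψ hψ (x + y) (-y) hxy
        have he : x + y + -y = x := by abel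
        rwa [he] at this
      exact absurd hx hxx
  · -- riskSet x unbounded below ⇒ all three unbounded below ⇒ all sInf = 0
    have hxy : ¬ BddBelow (riskSet T δ ψ (x + y)) :=
      riskSet_not_bddBelow_add T δ ψ hψ x y hx
    have hy : ¬ BddBelow (riskSet T δ ψ y) := by
      have := riskSet_not_bddBelow_add T δ ψ hψ (x + y) (-x) hxy
      rwa [hxy_y] at this
    rw [Real.sInf_of_not_bddBelow hx, Real.sInf_of_not_bddBelow hy,
      Real.sInf_of_not_bddBelow hxy]
    norm_num
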